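/- Let C be a Krull-Schmidt, K-linear extriangulated category (K a field) with dim_K Hom_C(X,Y) < ∞ and dim_K E(X,Y) < ∞ for all X,Y ∈ C. Let A → B --(g1,g2)^T--> C1 ⊕ C2 --δ--> be an E-triangle in C in which g1 : B → C1 is a retraction. Then this E-triangle is isomorphic to an E-triangle A --(0,f2)^T--> C1 ⊕ B2 --diag(1, g22)--> C1 ⊕ C2 --δ'-->, and moreover it is the direct sum of the E-triangles A --f2--> B2 --g22--> C2 --δ1--> and 0 → C1 --1--> C1 --0-->. -/

import Mathlib

open CategoryTheory CategoryTheory.Limits Opposite ZeroObject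

attribute [local instance] CategoryTheory.Limits.hasBinaryBiproducts_of_finite_biproducts

universe w v u

noncomputable section

/-- An object of a preadditive category with finite biproducts is *indecomposable* if it is
nonzero and admits no nontrivial direct sum decomposition. -/
def Indec {C : Type u} [Category.{v} C] [Preadditive C] [HasFiniteBiproducts C] (X : C) : Prop :=
  ¬ IsZero X ∧ ∀ (Y Z : C), Nonempty (X ≅ Y ⊞ Z) → IsZero Y ∨ IsZero Z

/-- A preadditive category is *Krull-Schmidt* if every object is (isomorphic to) a finite
biproduct of objects having local endomorphism rings. -/
def IsKrullSchmidt (C : Type u) [Category.{v} C] [Preadditive C] [HasFiniteBiproducts C] : Prop :=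
  ∀ X : C, ∃ (n : ℕ) (f : Fin n → C),
    (∀ i, IsLocalRing (CategoryTheory.End (f i))) ∧ Nonempty (X ≅ ⨁ f)

/-- `C` is *locally finite*: for every indecomposable `A` there are, up to isomorphism, only
finitely many indecomposables `B` with `Hom(A, B) ≠ 0`, and only finitely many indecomposables
`B` with `Hom(B, A) ≠ 0`. -/
def LocFinite (C : Type u) [Category.{v} C] [Preadditive C] [HasFiniteBiproducts C] : Prop :=
  ∀ A : C, Indec A →
    (∃ (n : ℕ) (ind : Fin n → C), ∀ B : C, Indec B → (∃ φ : A ⟶ B, φ ≠ 0) →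
        ∃ i, Nonempty (B ≅ ind i)) ∧
    (∃ (n : ℕ) (ind : Fin n → C), ∀ B : C, Indec B → (∃ φ : B ⟶ A, φ ≠ 0) →
        ∃ i, Nonempty (B ≅ ind i))

section ExtCatDef

variable (K : Type w) [Field K]
variable (C : Type u) [Category.{v} C] [Preadditive C] [Linear K C] [HasFiniteBiproducts C]

/-- An extriangulated structure (in the sense of Nakaoka–Palu) on the `K`-linear category `C`,
with `K`-linear extension groups: a biadditive functor `E : Cᵒᵖ × C → Ab` (here landing in
`K`-modules, recording the `K`-linear structure on the extension groups) together with an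
additive realization `real` of extensions by conflations, satisfying (ET1)–(ET4) and their
duals. -/
structure ExtCat where
  /-- the biadditive functor `E : Cᵒᵖ × C → Ab`. -/
  E : Cᵒᵖ ⥤ C ⥤ ModuleCat.{v} K
  additive₁ : E.Additive
  additive₂ : ∀ c : Cᵒᵖ, (E.obj c).Additive
  /-- `real x y δ` says that the sequence `x, y` realizes the extension `δ`, i.e.
  `(x, y, δ)` is an `E`-triangle. -/
  real : ∀ {a b c : C}, (a ⟶ b) → (b ⟶ c) → ((E.obj (op c)).obj a) → Prop
  /-- every extension is realized by some conflation. -/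
  real_exists : ∀ {a c : C} (δ : (E.obj (op c)).obj a),
    ∃ (b : C) (x : a ⟶ b) (y : b ⟶ c), real x y δ
  /-- the realization is well defined on equivalence classes of sequences. -/
  real_congr : ∀ {a b b' c : C} {x : a ⟶ b} {y : b ⟶ c} {x' : a ⟶ b'} {y' : b' ⟶ c}
    {δ : (E.obj (op c)).obj a} (e : b ≅ b'),
      x ≫ e.hom = x' → e.hom ≫ y' = y → real x y δ → real x' y' δ
  /-- any two realizations of the same extension are equivalent sequences. -/
  real_unique : ∀ {a b b' c : C} {x : a ⟶ b} {y : b ⟶ c} {x' : a ⟶ b'} {y' : b' ⟶ c}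
    {δ : (E.obj (op c)).obj a}, real x y δ → real x' y' δ →
      ∃ e : b ≅ b', x ≫ e.hom = x' ∧ e.hom ≫ y' = y
  /-- (ET2) realization of morphisms of extensions: if `f_* δ = g^* δ'` then `(f, g)` extends to
  a morphism of the realizing `E`-triangles. -/
  real_lift : ∀ {a b c a' b' c' : C} {x : a ⟶ b} {y : b ⟶ c} {x' : a' ⟶ b'} {y' : b' ⟶ c'}
    {δ : (E.obj (op c)).obj a} {δ' : (E.obj (op c')).obj a'} (f : a ⟶ a') (g : c ⟶ c'),
      real x y δ → real x' y' δ' →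
      ((E.obj (op c)).map f) δ = ((E.map g.op).app a') δ' →
      ∃ m : b ⟶ b', x ≫ m = f ≫ x' ∧ m ≫ y' = y ≫ g
  /-- the realization is additive, part (i): split extensions are realized by split sequences. -/
  real_zero : ∀ a c : C,
    real (biprod.inl : a ⟶ a ⊞ c) (biprod.snd : a ⊞ c ⟶ c) (0 : (E.obj (op c)).obj a)
  /-- the realization is additive, part (ii): it commutes with direct sums. -/
  real_sum : ∀ {a b c a' b' c' : C} {x : a ⟶ b} {y : b ⟶ c} {x' : a' ⟶ b'} {y' : b' ⟶ c'}
    {δ : (E.obj (op c)).obj a} {δ' : (E.obj (op c')).obj a'},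
      real x y δ → real x' y' δ' →
      real (biprod.map x x') (biprod.map y y')
        (((E.map (biprod.fst : c ⊞ c' ⟶ c).op).app (a ⊞ a'))
            (((E.obj (op c)).map (biprod.inl : a ⟶ a ⊞ a')) δ) +
         ((E.map (biprod.snd : c ⊞ c' ⟶ c').op).app (a ⊞ a'))
            (((E.obj (op c')).map (biprod.inr : a' ⟶ a ⊞ a')) δ'))
  /-- (ET3). -/
  et3 : ∀ {a b c a' b' c' : C} {x : a ⟶ b} {y : b ⟶ c} {x' : a' ⟶ b'} {y' : b' ⟶ c'}
    {δ : (E.obj (op c)).obj a} {δ' : (E.obj (op c')).obj a'} (f : a ⟶ a') (m : b ⟶ b'),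
      real x y δ → real x' y' δ' → x ≫ m = f ≫ x' →
      ∃ g : c ⟶ c', y ≫ g = m ≫ y' ∧ ((E.obj (op c)).map f) δ = ((E.map g.op).app a') δ'
  /-- (ET3)ᵒᵖ. -/
  et3op : ∀ {a b c a' b' c' : C} {x : a ⟶ b} {y : b ⟶ c} {x' : a' ⟶ b'} {y' : b' ⟶ c'}
    {δ : (E.obj (op c)).obj a} {δ' : (E.obj (op c')).obj a'} (g : c ⟶ c') (m : b ⟶ b'),
      real x y δ → real x' y' δ' → m ≫ y' = y ≫ g →
      ∃ f : a ⟶ a', x ≫ m = f ≫ x' ∧ ((E.obj (op c)).map f) δ = ((E.map g.op).app a') δ'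
  /-- (ET4). -/
  et4 : ∀ {A B D F G : C} {f : A ⟶ B} {f' : B ⟶ D} {g : B ⟶ G} {g' : G ⟶ F}
    {δ : (E.obj (op D)).obj A} {δ' : (E.obj (op F)).obj B},
      real f f' δ → real g g' δ' →
      ∃ (Eo : C) (d : D ⟶ Eo) (e : Eo ⟶ F) (h' : G ⟶ Eo) (δ'' : (E.obj (op Eo)).obj A),
        real (f ≫ g) h' δ'' ∧ f' ≫ d = g ≫ h' ∧ h' ≫ e = g' ∧
        real d e (((E.obj (op F)).map f') δ') ∧
        ((E.map d.op).app A) δ'' = δ ∧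
        ((E.obj (op Eo)).map f) δ'' = ((E.map e.op).app B) δ'
  /-- (ET4)ᵒᵖ. -/
  et4op : ∀ {A B D F Cc : C} {f' : D ⟶ A} {f : A ⟶ B} {g' : F ⟶ B} {g : B ⟶ Cc}
    {δ : (E.obj (op B)).obj D} {δ' : (E.obj (op Cc)).obj F},
      real f' f δ → real g' g δ' →
      ∃ (Eo : C) (d : D ⟶ Eo) (e : Eo ⟶ F) (h' : Eo ⟶ A) (δ'' : (E.obj (op Cc)).obj Eo),
        real h' (f ≫ g) δ'' ∧ d ≫ h' = f' ∧ h' ≫ f = e ≫ g' ∧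
        real d e (((E.map g'.op).app D) δ) ∧
        ((E.obj (op Cc)).map e) δ'' = δ' ∧
        ((E.obj (op B)).map d) δ = ((E.map g.op).app Eo) δ''

end ExtCatDef

namespace ExtCat

variable {K : Type w} [Field K]
variable {C : Type u} [Category.{v} C] [Preadditive C] [Linear K C] [HasFiniteBiproducts C]
variable (ξ : ExtCat K C)

/-- The extension group `E(c, a)`. -/
abbrev Ext (c a : C) : Type v := (ξ.E.obj (op c)).obj a

/-- Pushforward `f_* : E(c, a) → E(c, a')` along `f : a ⟶ a'`. -/
def push (c : C) {a a' : C} (f : a ⟶ a') (δ : ξ.Ext c a) : ξ.Ext c a' :=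
  ((ξ.E.obj (op c)).map f) δ

/-- Pullback `g^* : E(c, a) → E(c', a)` along `g : c' ⟶ c`. -/
def pull (a : C) {c c' : C} (g : c' ⟶ c) (δ : ξ.Ext c a) : ξ.Ext c' a :=
  ((ξ.E.map g.op).app a) δ

/-- An object `P` is projective if `E(P, A) = 0` for all `A`. -/
def ProjObj (P : C) : Prop := ∀ (A : C) (δ : ξ.Ext P A), δ = 0

/-- An object `I` is injective if `E(A, I) = 0` for all `A`. -/
def InjObj (I : C) : Prop := ∀ (A : C) (δ : ξ.Ext A I), δ = 0

end ExtCat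

section TriIsoDefs

variable {K : Type w} [Field K]
variable {C : Type u} [Category.{v} C] [Preadditive C] [HasFiniteBiproducts C]
variable (ξ : ExtCat K C)

/-- The direct sum `δ ⊕ δ'` of two `E`-extensions. -/
def extSum {a a' c c' : C} (δ : ξ.Ext c a) (δ' : ξ.Ext c' a') : ξ.Ext (c ⊞ c') (a ⊞ a') :=
  ξ.pull (a ⊞ a') (biprod.fst : c ⊞ c' ⟶ c) (ξ.push c (biprod.inl : a ⟶ a ⊞ a') δ) +
  ξ.pull (a ⊞ a') (biprod.snd : c ⊞ c' ⟶ c') (ξ.push c' (biprod.inr : a' ⟶ a ⊞ a') δ')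

/-- Two `E`-triangles are isomorphic: there is a morphism of `E`-triangles all of whose
components are isomorphisms. -/
def ExtTriIso {a b c a' b' c' : C} (x : a ⟶ b) (y : b ⟶ c) (δ : ξ.Ext c a)
    (x' : a' ⟶ b') (y' : b' ⟶ c') (δ' : ξ.Ext c' a') : Prop :=
  ∃ (ea : a ≅ a') (eb : b ≅ b') (ec : c ≅ c'),
    x ≫ eb.hom = ea.hom ≫ x' ∧ y ≫ ec.hom = eb.hom ≫ y' ∧
    ξ.push c ea.hom δ = ξ.pull a' ec.hom δ'

end TriIsoDefs


namespace ExtCat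

section Helper

set_option linter.unusedSectionVars false

variable {K : Type w} [Field K]
variable {C : Type u} [Category.{v} C] [Preadditive C] [Linear K C] [HasFiniteBiproducts C]
variable (ξ : ExtCat K C)

lemma pull_def {a c c' : C} (g : c' ⟶ c) (δ : ξ.Ext c a) :
    ((ξ.E.map g.op).app a) δ = ξ.pull a g δ := rfl

lemma push_def {a a' c : C} (f : a ⟶ a') (δ : ξ.Ext c a) :
    ((ξ.E.obj (op c)).map f) δ = ξ.push c f δ := rfl

lemma pull_id {a c : C} (δ : ξ.Ext c a) : ξ.pull a (𝟙 c) δ = δ := by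
  simp [ExtCat.pull]

lemma push_id {a c : C} (δ : ξ.Ext c a) : ξ.push c (𝟙 a) δ = δ := by
  simp [ExtCat.push]

lemma pull_pull {a c c' c'' : C} (g₁ : c'' ⟶ c') (g₂ : c' ⟶ c) (δ : ξ.Ext c a) :
    ξ.pull a g₁ (ξ.pull a g₂ δ) = ξ.pull a (g₁ ≫ g₂) δ := by
  simp [ExtCat.pull, op_comp]

lemma push_push {a a' a'' c : C} (f₁ : a ⟶ a') (f₂ : a' ⟶ a'') (δ : ξ.Ext c a) :
    ξ.push c f₂ (ξ.push c f₁ δ) = ξ.push c (f₁ ≫ f₂) δ := by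
  simp [ExtCat.push]

lemma pull_push {a a' c c' : C} (f : a ⟶ a') (g : c' ⟶ c) (δ : ξ.Ext c a) :
    ξ.pull a' g (ξ.push c f δ) = ξ.push c' f (ξ.pull a g δ) := by
  have h := ConcreteCategory.congr_hom ((ξ.E.map g.op).naturality f) δ
  simp only [ConcreteCategory.comp_apply] at h
  exact h

lemma push_zero {a a' c : C} (f : a ⟶ a') : ξ.push c f (0 : ξ.Ext c a) = 0 :=
  map_zero _

lemma pull_zero {a c c' : C} (g : c' ⟶ c) : ξ.pull a g (0 : ξ.Ext c a) = 0 :=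
  map_zero _

lemma pull_sub {a c c' : C} (g g' : c' ⟶ c) (δ : ξ.Ext c a) :
    ξ.pull a (g - g') δ = ξ.pull a g δ - ξ.pull a g' δ := by
  haveI := ξ.additive₁
  have hop : (g - g').op = g.op - g'.op := rfl
  rw [ExtCat.pull, hop, Functor.map_sub]
  rfl

lemma shear_comps {P Q : C} (t : P ⟶ Q) :
    (𝟙 (P ⊞ Q) - biprod.fst ≫ t ≫ biprod.inr) ≫ (𝟙 (P ⊞ Q) + biprod.fst ≫ t ≫ biprod.inr)
      = 𝟙 _ ∧
    (𝟙 (P ⊞ Q) + biprod.fst ≫ t ≫ biprod.inr) ≫ (𝟙 (P ⊞ Q) - biprod.fst ≫ t ≫ biprod.inr)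
      = 𝟙 _ := by
  constructor <;>
  · apply biprod.hom_ext <;>
      simp [Preadditive.sub_comp, Preadditive.comp_add, Preadditive.add_comp,
        Preadditive.comp_sub]

lemma real_id_zero (T : C) : ξ.real (𝟙 T) (0 : T ⟶ (0 : C)) 0 := by
  have h := ξ.real_zero T (0 : C)
  have hz : (biprod.snd : T ⊞ (0 : C) ⟶ (0 : C)) = 0 := (isZero_zero C).eq_of_tgt _ _
  refine ξ.real_congr (Iso.mk biprod.fst biprod.inl ?_ ?_) ?_ ?_ h
  · apply biprod.hom_ext
    · simp
    · exact ((isZero_zero C).eq_of_tgt _ _)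
  · simp
  · simp
  · exact ((isZero_zero C).eq_of_tgt _ _)

lemma real_zero_id (T : C) : ξ.real (0 : (0 : C) ⟶ T) (𝟙 T) 0 := by
  have h := ξ.real_zero (0 : C) T
  have hz : (biprod.fst : (0 : C) ⊞ T ⟶ (0 : C)) = 0 := (isZero_zero C).eq_of_tgt _ _
  refine ξ.real_congr (Iso.mk biprod.snd biprod.inr ?_ ?_) ?_ ?_ h
  · apply biprod.hom_ext'
    · exact ((isZero_zero C).eq_of_src _ _)
    · simp
  · simp
  · simp
  · simp

lemma lift_through {a b c T : C} {x : a ⟶ b} {y : b ⟶ c} {δ : ξ.Ext c a}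
    (h : ξ.real x y δ) (t : T ⟶ b) (ht : t ≫ y = 0) : ∃ u : T ⟶ a, u ≫ x = t := by
  obtain ⟨f, hf, -⟩ := ξ.et3op (0 : (0 : C) ⟶ c) t (ξ.real_id_zero T) h (by simp [ht])
  exact ⟨f, by simpa using hf.symm⟩

lemma pull_comp_y {a b c T : C} {x : a ⟶ b} {y : b ⟶ c} {δ : ξ.Ext c a}
    (h : ξ.real x y δ) (u : T ⟶ b) : ξ.pull a (u ≫ y) δ = 0 := by
  obtain ⟨g, hg1, hg2⟩ := ξ.et3 (0 : (0 : C) ⟶ a) u (ξ.real_zero_id T) h (by simp)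
  have hg : g = u ≫ y := by simpa using hg1
  rw [← hg, ← ξ.pull_def, ← hg2, ξ.push_def]
  haveI := ξ.additive₂ (op T)
  have : ((ξ.E.obj (op T)).map (0 : (0 : C) ⟶ a)) = 0 := Functor.map_zero _ _ _
  rw [ExtCat.push, this]
  rfl

lemma endo_iso {a b c : C} {x : a ⟶ b} {y : b ⟶ c} {δ : ξ.Ext c a}
    (h : ξ.real x y δ) (u : b ⟶ b) (hx : x ≫ u = x) (hy : u ≫ y = y) : IsIso u := by
  obtain ⟨w, hw⟩ := ξ.lift_through h (u - 𝟙 b)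
    (by rw [Preadditive.sub_comp, hy, Category.id_comp, sub_self])
  have hxn : x ≫ (u - 𝟙 b) = 0 := by
    rw [Preadditive.comp_sub, hx, Category.comp_id, sub_self]
  have hn2 : (u - 𝟙 b) ≫ (u - 𝟙 b) = 0 := by
    nth_rewrite 1 [← hw]
    rw [Category.assoc, hxn, Limits.comp_zero]
  refine ⟨𝟙 b + 𝟙 b - u, ?_, ?_⟩
  · have e1 : u ≫ (𝟙 b + 𝟙 b - u) = 𝟙 b - (u - 𝟙 b) ≫ (u - 𝟙 b) := by
      simp only [Preadditive.comp_sub, Preadditive.sub_comp, Preadditive.comp_add,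
        Preadditive.add_comp, Category.id_comp, Category.comp_id]
      abel
    rw [e1, hn2, sub_zero]
  · have e1 : (𝟙 b + 𝟙 b - u) ≫ u = 𝟙 b - (u - 𝟙 b) ≫ (u - 𝟙 b) := by
      simp only [Preadditive.comp_sub, Preadditive.sub_comp, Preadditive.comp_add,
        Preadditive.add_comp, Category.id_comp, Category.comp_id]
      abel
    rw [e1, hn2, sub_zero]

lemma isIso_of_comps {P Q : C} (f : P ⟶ Q) (g : Q ⟶ P)
    (h1 : IsIso (f ≫ g)) (h2 : IsIso (g ≫ f)) : IsIso f := by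
  have key : g ≫ inv (f ≫ g) = inv (g ≫ f) ≫ g := by
    rw [← cancel_epi (g ≫ f)]
    rw [IsIso.hom_inv_id_assoc]
    rw [Category.assoc, ← Category.assoc f g, IsIso.hom_inv_id, Category.comp_id]
  refine ⟨g ≫ inv (f ≫ g), ?_, ?_⟩
  · rw [← Category.assoc, IsIso.hom_inv_id]
  · rw [key, Category.assoc, IsIso.inv_hom_id]

lemma real_pull_iso {a b c c' : C} {x : a ⟶ b} {y : b ⟶ c} {δ : ξ.Ext c a}
    (h : ξ.real x y δ) (γ : c' ⟶ c) [IsIso γ] :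
    ξ.real x (y ≫ inv γ) (ξ.pull a γ δ) := by
  obtain ⟨b₀, x₀, y₀, h₀⟩ := ξ.real_exists (ξ.pull a γ δ)
  obtain ⟨m, hm1, hm2⟩ := ξ.real_lift (𝟙 a) γ h₀ h
    (by rw [ξ.push_def, ξ.pull_def, ξ.push_id])
  obtain ⟨m', hm1', hm2'⟩ := ξ.real_lift (𝟙 a) (inv γ) h h₀
    (by rw [ξ.push_def, ξ.pull_def, ξ.push_id, ξ.pull_pull, IsIso.inv_hom_id, ξ.pull_id])
  rw [Category.id_comp] at hm1 hm1'
  have hmm' : IsIso (m ≫ m') := by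
    refine ξ.endo_iso h₀ (m ≫ m') ?_ ?_
    · rw [← Category.assoc, hm1, hm1']
    · rw [Category.assoc, hm2', ← Category.assoc, hm2, Category.assoc,
        IsIso.hom_inv_id, Category.comp_id]
  have hm'm : IsIso (m' ≫ m) := by
    refine ξ.endo_iso h (m' ≫ m) ?_ ?_
    · rw [← Category.assoc, hm1', hm1]
    · rw [Category.assoc, hm2, ← Category.assoc, hm2', Category.assoc,
        IsIso.inv_hom_id, Category.comp_id]
  haveI : IsIso m := isIso_of_comps m m' hmm' hm'm
  refine ξ.real_congr (asIso m) hm1 ?_ h₀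
  show m ≫ y ≫ inv γ = y₀
  rw [← Category.assoc, hm2, Category.assoc, IsIso.hom_inv_id, Category.comp_id]

lemma real_push_iso {a a' b c : C} {x : a ⟶ b} {y : b ⟶ c} {δ : ξ.Ext c a}
    (h : ξ.real x y δ) (α : a ⟶ a') [IsIso α] :
    ξ.real (inv α ≫ x) y (ξ.push c α δ) := by
  obtain ⟨b₀, x₀, y₀, h₀⟩ := ξ.real_exists (ξ.push c α δ)
  obtain ⟨m, hm1, hm2⟩ := ξ.real_lift α (𝟙 c) h h₀
    (by rw [ξ.push_def, ξ.pull_def, ξ.pull_id])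
  obtain ⟨m', hm1', hm2'⟩ := ξ.real_lift (inv α) (𝟙 c) h₀ h
    (by rw [ξ.push_def, ξ.pull_def, ξ.pull_id, ξ.push_push, IsIso.hom_inv_id, ξ.push_id])
  rw [Category.comp_id] at hm2 hm2'
  have hmm' : IsIso (m ≫ m') := by
    refine ξ.endo_iso h (m ≫ m') ?_ ?_
    · rw [← Category.assoc, hm1, Category.assoc, hm1', IsIso.hom_inv_id_assoc]
    · rw [Category.assoc, hm2', hm2]
  have hm'm : IsIso (m' ≫ m) := by
    refine ξ.endo_iso h₀ (m' ≫ m) ?_ ?_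
    · rw [← Category.assoc, hm1', Category.assoc, hm1, IsIso.inv_hom_id_assoc]
    · rw [Category.assoc, hm2, hm2']
  haveI : IsIso m' := isIso_of_comps m' m hm'm hmm'
  exact ξ.real_congr (asIso m') hm1' hm2' h₀


end Helper

end ExtCat

theorem stmt5 (K : Type w) [Field K] (C : Type u) [Category.{v} C] [Preadditive C]
    [Linear K C] [HasFiniteBiproducts C] (hKS : IsKrullSchmidt C) (ξ : ExtCat K C)
    (homFin : ∀ X Y : C, FiniteDimensional K (X ⟶ Y))
    (extFin : ∀ X Y : C, FiniteDimensional K (ξ.Ext X Y))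
    (A B C₁ C₂ : C) (x : A ⟶ B) (y : B ⟶ C₁ ⊞ C₂) (δ : ξ.Ext (C₁ ⊞ C₂) A)
    (hreal : ξ.real x y δ)
    (hretr : ∃ s : C₁ ⟶ B, s ≫ y ≫ biprod.fst = 𝟙 C₁) :
    ∃ (B₂ : C) (f₂ : A ⟶ B₂) (g₂₂ : B₂ ⟶ C₂) (δ₁ : ξ.Ext C₂ A) (δ' : ξ.Ext (C₁ ⊞ C₂) A),
      ξ.real f₂ g₂₂ δ₁ ∧
      ξ.real (0 : (0 : C) ⟶ C₁) (𝟙 C₁) (0 : ξ.Ext C₁ (0 : C)) ∧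
      ξ.real (biprod.lift (0 : A ⟶ C₁) f₂) (biprod.map (𝟙 C₁) g₂₂) δ' ∧
      ExtTriIso ξ x y δ (biprod.lift (0 : A ⟶ C₁) f₂) (biprod.map (𝟙 C₁) g₂₂) δ' ∧
      ExtTriIso ξ x y δ (biprod.map f₂ (0 : (0 : C) ⟶ C₁)) (biprod.map g₂₂ (𝟙 C₁))
        (extSum ξ δ₁ (0 : ξ.Ext C₁ (0 : C))) := by
  classical
  obtain ⟨s, hs⟩ := hretr
  have hz0 := isZero_zero C
  -- the twist automorphism θ of C₁ ⊞ C₂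
  set X : C₁ ⊞ C₂ ⟶ C₁ ⊞ C₂ := biprod.fst ≫ (s ≫ y ≫ biprod.snd) ≫ biprod.inr with hX
  set θ : C₁ ⊞ C₂ ⟶ C₁ ⊞ C₂ := 𝟙 _ - X with hθ
  set θi : C₁ ⊞ C₂ ⟶ C₁ ⊞ C₂ := 𝟙 _ + X with hθi
  have hXX : X ≫ X = 0 := by rw [hX]; simp
  have hθθi : θ ≫ θi = 𝟙 _ := by
    rw [hθ, hθi, hX]
    exact (ExtCat.shear_comps (C := C) (s ≫ y ≫ biprod.snd)).1
  have hθiθ : θi ≫ θ = 𝟙 _ := by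
    rw [hθ, hθi, hX]
    exact (ExtCat.shear_comps (C := C) (s ≫ y ≫ biprod.snd)).2
  haveI hiθi : IsIso θi := ⟨θ, hθiθ, hθθi⟩
  have hinvθi : inv θi = θ := IsIso.inv_eq_of_hom_inv_id hθiθ
  -- the twisted triangle
  have hy' : ξ.real x (y ≫ θ) (ξ.pull A θi δ) := by
    have h := ξ.real_pull_iso hreal θi
    rwa [hinvθi] at h
  set δθ : ξ.Ext (C₁ ⊞ C₂) A := ξ.pull A θi δ with hδθ
  have hpullθ : ξ.pull A θ δθ = δ := by
    rw [hδθ, ξ.pull_pull, hθθi, ξ.pull_id]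
  have hsy' : s ≫ y ≫ θ = biprod.inl := by
    apply biprod.hom_ext
    · simp [hθ, hX, hs, reassoc_of% hs, Preadditive.comp_sub, Preadditive.sub_comp]
    · simp [hθ, hX, hs, reassoc_of% hs, Preadditive.comp_sub, Preadditive.sub_comp]
  -- the small triangle
  set δ₁ : ξ.Ext C₂ A := ξ.pull A (biprod.inr : C₂ ⟶ C₁ ⊞ C₂) δθ with hδ₁
  obtain ⟨B₂, f₂, g₂₂, h1⟩ := ξ.real_exists δ₁
  obtain ⟨m, hm1, hm2⟩ := ξ.real_lift (𝟙 A) (biprod.inr : C₂ ⟶ C₁ ⊞ C₂) h1 hy'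
    (by rw [ξ.push_def, ξ.pull_def, ξ.push_id])
  rw [Category.id_comp] at hm1
  -- the split triangle and the sum triangle
  have hzero := ξ.real_zero_id C₁
  have hsum := ξ.real_sum hzero h1
  have hsndinr : (biprod.snd : (0 : C) ⊞ A ⟶ A) ≫ biprod.inr = 𝟙 _ := by
    apply biprod.hom_ext'
    · exact hz0.eq_of_src _ _
    · simp
  haveI : IsIso (biprod.snd : (0 : C) ⊞ A ⟶ A) := ⟨biprod.inr, hsndinr, by simp⟩
  have hinvsnd : inv (biprod.snd : (0 : C) ⊞ A ⟶ A) = biprod.inr :=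
    IsIso.inv_eq_of_hom_inv_id hsndinr
  have h5 := ξ.real_push_iso hsum (biprod.snd : (0 : C) ⊞ A ⟶ A)
  rw [hinvsnd] at h5
  have hcomp : (biprod.inr : A ⟶ (0 : C) ⊞ A) ≫ biprod.map (0 : (0 : C) ⟶ C₁) f₂
      = biprod.lift (0 : A ⟶ C₁) f₂ := by
    apply biprod.hom_ext <;> simp
  rw [hcomp] at h5
  simp only [ExtCat.pull_def, ExtCat.push_def] at h5
  -- identify the extension
  have hkey : ξ.pull A (biprod.snd : C₁ ⊞ C₂ ⟶ C₂) δ₁ = δθ := by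
    have hinl0 : ξ.pull A (biprod.inl : C₁ ⟶ C₁ ⊞ C₂) δθ = 0 := by
      rw [← hsy']
      exact ξ.pull_comp_y hy' s
    have htot : (biprod.snd : C₁ ⊞ C₂ ⟶ C₂) ≫ biprod.inr
        = 𝟙 (C₁ ⊞ C₂) - biprod.fst ≫ biprod.inl := by
      rw [← biprod.total]; abel
    rw [hδ₁, ξ.pull_pull, htot, ξ.pull_sub, ξ.pull_id, ← ξ.pull_pull, hinl0, ξ.pull_zero,
      sub_zero]
  have hext : ξ.push (C₁ ⊞ C₂) (biprod.snd : (0 : C) ⊞ A ⟶ A)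
      (ξ.pull ((0 : C) ⊞ A) (biprod.fst : C₁ ⊞ C₂ ⟶ C₁)
          (ξ.push C₁ (biprod.inl : (0 : C) ⟶ (0 : C) ⊞ A) 0)
        + ξ.pull ((0 : C) ⊞ A) (biprod.snd : C₁ ⊞ C₂ ⟶ C₂)
          (ξ.push C₂ (biprod.inr : A ⟶ (0 : C) ⊞ A) δ₁)) = δθ := by
    rw [ξ.push_zero, ξ.pull_zero, zero_add, ← ξ.pull_push, ξ.push_push, biprod.inr_snd,
      ξ.push_id, hkey]
  rw [hext] at h5
  -- the middle isomorphism φ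
  set φ : C₁ ⊞ B₂ ⟶ B := biprod.desc s m with hφ
  have hxφ : biprod.lift (0 : A ⟶ C₁) f₂ ≫ φ = x := by
    rw [hφ, biprod.lift_desc, Limits.zero_comp, zero_add, hm1]
  have hφy' : φ ≫ y ≫ θ = biprod.map (𝟙 C₁) g₂₂ := by
    apply biprod.hom_ext'
    · rw [hφ, biprod.inl_desc_assoc, hsy', biprod.inl_map, Category.id_comp]
    · rw [hφ, biprod.inr_desc_assoc, hm2, biprod.inr_map]
  obtain ⟨m', hm1', hm2'⟩ := ξ.real_lift (𝟙 A) θ hreal h5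
    (by rw [ξ.push_def, ξ.pull_def, ξ.push_id, hpullθ])
  rw [Category.id_comp] at hm1'
  have hu1 : IsIso (φ ≫ m') := by
    refine ξ.endo_iso h5 (φ ≫ m') ?_ ?_
    · rw [← Category.assoc, hxφ, hm1']
    · rw [Category.assoc, hm2', hφy']
  have hu2 : IsIso (m' ≫ φ) := by
    refine ξ.endo_iso hy' (m' ≫ φ) ?_ ?_
    · rw [← Category.assoc, hm1', hxφ]
    · rw [Category.assoc, hφy', hm2']
  haveI hφiso : IsIso φ := ExtCat.isIso_of_comps φ m' hu1 hu2
  have hxinv : x ≫ inv φ = biprod.lift (0 : A ⟶ C₁) f₂ := by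
    rw [← hxφ, Category.assoc, IsIso.hom_inv_id, Category.comp_id]
  -- assemble
  refine ⟨B₂, f₂, g₂₂, δ₁, δθ, h1, hzero, h5, ?_, ?_⟩
  · refine ⟨Iso.refl A, (asIso φ).symm, Iso.mk θ θi hθθi hθiθ, ?_, ?_, ?_⟩
    · simpa using hxinv
    · show y ≫ θ = inv φ ≫ biprod.map (𝟙 C₁) g₂₂
      rw [← hφy', IsIso.inv_hom_id_assoc]
    · show ξ.push (C₁ ⊞ C₂) (𝟙 A) δ = ξ.pull A θ δθ
      rw [ξ.push_id, hpullθ]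
  · refine ⟨Iso.mk (biprod.inl : A ⟶ A ⊞ (0 : C)) biprod.fst (by simp) ?_,
      (asIso φ).symm ≪≫ Iso.mk (biprod.lift biprod.snd biprod.fst : C₁ ⊞ B₂ ⟶ B₂ ⊞ C₁)
        (biprod.lift biprod.snd biprod.fst) (by apply biprod.hom_ext <;> simp)
        (by apply biprod.hom_ext <;> simp),
      Iso.mk θ θi hθθi hθiθ ≪≫ Iso.mk (biprod.lift biprod.snd biprod.fst : C₁ ⊞ C₂ ⟶ C₂ ⊞ C₁)
        (biprod.lift biprod.snd biprod.fst) (by apply biprod.hom_ext <;> simp)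
        (by apply biprod.hom_ext <;> simp), ?_, ?_, ?_⟩
    · apply biprod.hom_ext
      · simp
      · exact hz0.eq_of_tgt _ _
    · show x ≫ inv φ ≫ biprod.lift biprod.snd biprod.fst
        = biprod.inl ≫ biprod.map f₂ (0 : (0 : C) ⟶ C₁)
      rw [← Category.assoc, hxinv]
      apply biprod.hom_ext <;> simp
    · show y ≫ θ ≫ biprod.lift biprod.snd biprod.fst
        = (inv φ ≫ biprod.lift biprod.snd biprod.fst) ≫ biprod.map g₂₂ (𝟙 C₁)
      have keyM : (biprod.lift biprod.snd biprod.fst : C₁ ⊞ B₂ ⟶ B₂ ⊞ C₁)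
            ≫ biprod.map g₂₂ (𝟙 C₁)
          = biprod.map (𝟙 C₁) g₂₂ ≫ (biprod.lift biprod.snd biprod.fst : C₁ ⊞ C₂ ⟶ C₂ ⊞ C₁) := by
        apply biprod.hom_ext <;> simp
      simp only [Category.assoc]
      rw [keyM, ← hφy']
      simp only [Category.assoc, IsIso.inv_hom_id_assoc]
    · show ξ.push (C₁ ⊞ C₂) (biprod.inl : A ⟶ A ⊞ (0 : C)) δ
        = ξ.pull (A ⊞ (0 : C)) (θ ≫ biprod.lift biprod.snd biprod.fst) (extSum ξ δ₁ 0)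
      have hc : (θ ≫ (biprod.lift biprod.snd biprod.fst : C₁ ⊞ C₂ ⟶ C₂ ⊞ C₁))
          ≫ (biprod.fst : C₂ ⊞ C₁ ⟶ C₂) = θ ≫ biprod.snd := by
        simp
      simp only [extSum]
      rw [ξ.push_zero, ξ.pull_zero, add_zero, ξ.pull_pull, hc, ξ.pull_push, ← ξ.pull_pull,
        hkey, hpullθ]
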